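/- arXiv:2303.07431 — 3 statements merged into one kernel-verified Lean document; each statement's English description precedes it below -/
import Mathlib

section
/- Let 𝔄 be a C*-algebra, ω a state on 𝔄, and A ∈ 𝔄 a nonzero element with |ω(A)| = ‖A‖. Then in the GNS representation (H_ω, π_ω, Ω_ω) of ω, the vector π_ω(A)Ω_ω is a nonzero scalar multiple of Ω_ω; consequently the state B ↦ ω(A*BA)/ω(A*A) equals ω. -/
set_option maxHeartbeats 1000000


open scoped ComplexOrder

set_option linter.unusedSectionVars false

section AuxSesq

variable {R : Type*} [NonUnitalRing R] [StarRing R] [Module ℂ R] [StarModule ℂ R]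
  [SMulCommClass ℂ R R] [IsScalarTower ℂ R R]

/-- A positive semidefinite sesquilinear form coming from a positive functional is Hermitian. -/
lemma herm_aux (f : R →ₗ[ℂ] ℂ) (hf : ∀ u : R, 0 ≤ f (star u * u)) (x y : R) :
    f (star y * x) = (starRingEnd ℂ) (f (star x * y)) := by
  have him : ∀ u : R, (f (star u * u)).im = 0 := fun u => ((Complex.nonneg_iff.mp (hf u)).2).symm
  have h1 : (f (star x * y)).im + (f (star y * x)).im = 0 := by
    have h := him (x + y)
    simp only [star_add, add_mul, mul_add, map_add, Complex.add_im, him x, him y] at h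
    linarith
  have h2 : (f (star x * y)).re = (f (star y * x)).re := by
    have h := him (x + Complex.I • y)
    simp only [star_add, star_smul, add_mul, mul_add, smul_mul_assoc, mul_smul_comm,
      smul_smul, map_add, map_smul, map_neg, Complex.add_im, Complex.smul_im, smul_eq_mul,
      Complex.star_def, Complex.conj_I, neg_mul, neg_smul, neg_neg, Complex.I_mul_I,
      him x, him y, Complex.mul_im, Complex.mul_re, Complex.I_re, Complex.I_im,
      Complex.neg_im, Complex.neg_re, one_smul, one_mul, zero_mul, mul_zero, add_zero,
      zero_add, mul_one] at h
    linarith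
  exact Complex.ext h2.symm (by simpa [Complex.conj_im] using by linarith)

/-- The positive semidefinite sesquilinear form attached to a positive functional. -/
noncomputable def coreOf (f : R →ₗ[ℂ] ℂ) (hf : ∀ u : R, 0 ≤ f (star u * u)) :
    PreInnerProductSpace.Core ℂ R where
  inner x y := f (star x * y)
  conj_inner_symm x y := by
    simpa using congrArg (starRingEnd ℂ) (herm_aux f hf x y)
  re_inner_nonneg x := (Complex.nonneg_iff.mp (hf x)).1
  add_left x y z := by simp [star_add, add_mul]
  smul_left x y r := by simp [star_smul, smul_mul_assoc]

/-- Cauchy–Schwarz inequality for a positive functional. -/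
lemma cs_aux (f : R →ₗ[ℂ] ℂ) (hf : ∀ u : R, 0 ≤ f (star u * u)) (x y : R) :
    ‖f (star x * y)‖ ^ 2 ≤ (f (star x * x)).re * (f (star y * y)).re := by
  letI c := coreOf f hf
  letI : Inner ℂ R := c.toInner
  have h := InnerProductSpace.Core.inner_mul_inner_self_le (𝕜 := ℂ) (F := R) x y
  have hxy : (inner ℂ x y : ℂ) = f (star x * y) := rfl
  have hyx : ‖(inner ℂ y x : ℂ)‖ = ‖f (star x * y)‖ := by
    show ‖f (star y * x)‖ = _
    rw [herm_aux f hf x y, RCLike.norm_conj]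
  rw [hxy, hyx] at h
  rw [sq]; exact h

end AuxSesq

section Approx

variable {A : Type*} [NonUnitalCStarAlgebra A]

/-- Approximate-unit-type elements adapted to a single element `x`. -/
lemma approx_unit (x : A) {c : ℝ} (hc : 0 < c) :
    ∃ e : A, IsSelfAdjoint e ∧ ‖e‖ ≤ 1 ∧ ‖x - e * x‖ ^ 2 ≤ c / 4 := by
  set h : A := x * star x with hdef
  have hh : IsSelfAdjoint h := .mul_star_self x
  have hd : ∀ t : ℝ, |t| + c ≠ 0 := fun t => by positivity
  set f : ℝ → ℝ := fun t => |t| / (|t| + c) with hf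
  have hfc : Continuous f := continuous_abs.div (continuous_abs.add continuous_const) hd
  have hf0 : f 0 = 0 := by simp [hf]
  set e : A := cfcₙ f h with he
  have hsa : IsSelfAdjoint e := cfcₙ_predicate f h
  refine ⟨e, hsa, norm_cfcₙ_le fun t _ => ?_, ?_⟩
  · rw [Real.norm_eq_abs, abs_of_nonneg (by positivity)]
    rw [div_le_one (by positivity)]
    linarith [abs_nonneg t, hc.le]
  · have hstar : star (x - e * x) = star x - star x * e := by
      rw [star_sub, star_mul, hsa.star_eq]
    have hexp : (x - e * x) * star (x - e * x) = h - h * e - (e * h - e * (h * e)) := by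
      rw [hstar, hdef]; noncomm_ring
    set g : ℝ → ℝ := fun t => t * (1 - f t) ^ 2 with hg
    have hgc : Continuous g := by fun_prop
    have hge : h - h * e - (e * h - e * (h * e)) = cfcₙ g h := by
      have h1 : h * e = cfcₙ (fun t : ℝ => t * f t) h := by
        rw [cfcₙ_mul _ _ h (by fun_prop) (by simp) (by fun_prop) hf0, cfcₙ_id' ℝ h]
      have h2 : e * h = cfcₙ (fun t : ℝ => f t * t) h := by
        rw [cfcₙ_mul _ _ h (by fun_prop) hf0 (by fun_prop) (by simp), cfcₙ_id' ℝ h]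
      have h3 : e * (h * e) = cfcₙ (fun t : ℝ => f t * (t * f t)) h := by
        rw [h1, he, ← cfcₙ_mul _ _ h (by fun_prop) hf0 (by fun_prop) (by simp [hf0])]
      rw [h3, h1, h2]
      have hrhs : cfcₙ g h = cfcₙ (fun t : ℝ => t) h - cfcₙ (fun t : ℝ => t * f t) h -
          (cfcₙ (fun t : ℝ => f t * t) h - cfcₙ (fun t : ℝ => f t * (t * f t)) h) := by
        rw [← cfcₙ_sub _ _ h (by fun_prop) (by simp [hf0]) (by fun_prop) (by simp [hf0]),
            ← cfcₙ_sub _ _ h (by fun_prop) (by simp [hf0]) (by fun_prop) (by simp [hf0]),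
            ← cfcₙ_sub _ _ h (by fun_prop) (by simp) (by fun_prop) (by simp [hf0])]
        exact cfcₙ_congr fun t _ => by simp only [hg]; ring
      rw [hrhs, cfcₙ_id' ℝ h]
    calc ‖x - e * x‖ ^ 2 = ‖(x - e * x) * star (x - e * x)‖ := by
          rw [CStarRing.norm_self_mul_star, sq]
      _ = ‖cfcₙ g h‖ := by rw [hexp, hge]
      _ ≤ c / 4 := by
          refine norm_cfcₙ_le fun t _ => ?_
          have h1f : 1 - f t = c / (|t| + c) := by
            rw [hf]; field_simp; ring
          have : ‖g t‖ = |t| * (c / (|t| + c)) ^ 2 := by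
            rw [hg, Real.norm_eq_abs, abs_mul, h1f, abs_pow,
              abs_of_nonneg (by positivity : (0:ℝ) ≤ c / (|t| + c))]
          rw [this, div_pow, ← mul_div_assoc, div_le_div_iff₀ (by positivity) (by positivity)]
          nlinarith [sq_nonneg (|t| - c), abs_nonneg t, sq_nonneg (|t| + c), hc.le]

end Approx

section CStarAux

variable {A : Type*} [NonUnitalCStarAlgebra A] [NormedSpace ℂ A] [StarModule ℂ A]
  [SMulCommClass ℂ A A] [IsScalarTower ℂ A A]

lemma omega_pos' (ω : A →L[ℂ] ℂ) (hpos : ∀ u : A, 0 ≤ ω (star u * u)) :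
    ∀ u : A, 0 ≤ (ω : A →ₗ[ℂ] ℂ) (star u * u) := fun u => by
  simpa using hpos u

variable (ω : A →L[ℂ] ℂ) (hpos : ∀ u : A, 0 ≤ ω (star u * u)) (hn : ‖ω‖ ≤ 1)

include hpos hn in
/-- `|ω x|² ≤ Re ω(x* x)` for a positive functional of norm at most one. -/
lemma fact2 (x : A) : ‖ω x‖ ^ 2 ≤ (ω (star x * x)).re := by
  have hre : 0 ≤ (ω (star x * x)).re := (Complex.nonneg_iff.mp (hpos x)).1
  have key : ∀ δ : ℝ, 0 < δ → ‖ω x‖ ≤ Real.sqrt ((ω (star x * x)).re) + δ := by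
    intro δ hδ
    obtain ⟨e, hsa, he1, hex⟩ := approx_unit x (c := 4 * δ ^ 2) (by positivity)
    have hex' : ‖x - e * x‖ ≤ δ := by
      nlinarith [norm_nonneg (x - e * x)]
    have h1 : ‖ω (x - e * x)‖ ≤ δ := by
      calc ‖ω (x - e * x)‖ ≤ ‖ω‖ * ‖x - e * x‖ := ω.le_opNorm _
        _ ≤ 1 * δ := by
            apply mul_le_mul hn hex' (norm_nonneg _) zero_le_one
        _ = δ := one_mul δ
    have h2 : ‖ω (e * x)‖ ≤ Real.sqrt ((ω (star x * x)).re) := by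
      have hcs := cs_aux (ω : A →ₗ[ℂ] ℂ) (omega_pos' ω hpos) e x
      simp only [ContinuousLinearMap.coe_coe] at hcs
      have hee : (ω (star e * e)).re ≤ 1 := by
        calc (ω (star e * e)).re ≤ ‖ω (star e * e)‖ := by
              simpa using
                (le_abs_self _).trans (Complex.abs_re_le_norm (ω (star e * e)))
          _ ≤ ‖ω‖ * ‖star e * e‖ := ω.le_opNorm _
          _ ≤ 1 * 1 := by
              apply mul_le_mul hn ?_ (norm_nonneg _) zero_le_one
              calc ‖star e * e‖ ≤ ‖star e‖ * ‖e‖ := norm_mul_le _ _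
                _ ≤ 1 * 1 := by
                    rw [norm_star]
                    exact mul_le_mul he1 he1 (norm_nonneg _) zero_le_one
                _ = 1 := one_mul 1
          _ = 1 := one_mul 1
      rw [Real.le_sqrt (norm_nonneg _) hre]
      calc ‖ω (e * x)‖ ^ 2 = ‖ω (star e * x)‖ ^ 2 := by rw [hsa.star_eq]
        _ ≤ (ω (star e * e)).re * (ω (star x * x)).re := hcs
        _ ≤ 1 * (ω (star x * x)).re := mul_le_mul_of_nonneg_right hee hre
        _ = _ := one_mul _
    calc ‖ω x‖ = ‖ω (e * x) + ω (x - e * x)‖ := by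
          rw [← map_add, show e * x + (x - e * x) = x from by abel]
      _ ≤ ‖ω (e * x)‖ + ‖ω (x - e * x)‖ := norm_add_le _ _
      _ ≤ Real.sqrt ((ω (star x * x)).re) + δ := add_le_add h2 h1
  have : ‖ω x‖ ≤ Real.sqrt ((ω (star x * x)).re) :=
    le_of_forall_pos_le_add fun ε hε => key ε hε
  calc ‖ω x‖ ^ 2 ≤ Real.sqrt ((ω (star x * x)).re) ^ 2 :=
        pow_le_pow_left₀ (norm_nonneg _) this 2
    _ = _ := Real.sq_sqrt hre

include hpos hn in
/-- A positive functional of norm at most one is Hermitian. -/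
lemma herm2 (x : A) : ω (star x) = (starRingEnd ℂ) (ω x) := by
  have key : ∀ δ : ℝ, 0 < δ → ‖ω (star x) - (starRingEnd ℂ) (ω x)‖ ≤ 2 * δ := by
    intro δ hδ
    obtain ⟨e, hsa, he1, hex⟩ := approx_unit x (c := 4 * δ ^ 2) (by positivity)
    have hex' : ‖x - e * x‖ ≤ δ := by nlinarith [norm_nonneg (x - e * x)]
    have hid : ω (star x) - (starRingEnd ℂ) (ω x)
        = ω (star x - star x * e) + (starRingEnd ℂ) (ω (e * x) - ω x) := by
      have hherm : ω (star x * e) = (starRingEnd ℂ) (ω (e * x)) := by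
        have := herm_aux (ω : A →ₗ[ℂ] ℂ) (omega_pos' ω hpos) e x
        simp only [ContinuousLinearMap.coe_coe, hsa.star_eq] at this
        exact this
      rw [map_sub, map_sub, hherm]
      ring
    calc ‖ω (star x) - (starRingEnd ℂ) (ω x)‖
        ≤ ‖ω (star x - star x * e)‖ + ‖(starRingEnd ℂ) (ω (e * x) - ω x)‖ := by
          rw [hid]; exact norm_add_le _ _
      _ ≤ δ + δ := by
          apply add_le_add
          · calc ‖ω (star x - star x * e)‖ ≤ ‖ω‖ * ‖star x - star x * e‖ := ω.le_opNorm _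
              _ ≤ 1 * δ := by
                  apply mul_le_mul hn ?_ (norm_nonneg _) zero_le_one
                  have : star x - star x * e = star (x - e * x) := by
                    rw [star_sub, star_mul, hsa.star_eq]
                  rw [this, norm_star]
                  exact hex'
              _ = δ := one_mul δ
          · rw [RCLike.norm_conj]
            calc ‖ω (e * x) - ω x‖ = ‖ω (x - e * x)‖ := by
                  rw [← map_sub, ← norm_neg, ← map_neg,
                    show -(e * x - x) = x - e * x from by abel]
              _ ≤ ‖ω‖ * ‖x - e * x‖ := ω.le_opNorm _
              _ ≤ 1 * δ := mul_le_mul hn hex' (norm_nonneg _) zero_le_one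
              _ = δ := one_mul δ
      _ = 2 * δ := by ring
  have : ‖ω (star x) - (starRingEnd ℂ) (ω x)‖ ≤ 0 :=
    le_of_forall_pos_le_add fun ε hε => by
      simpa using (key (ε / 2) (by positivity)).trans (by linarith)
  rw [← sub_eq_zero]
  exact norm_le_zero_iff.mp this

omit hpos hn

/-- Cauchy-Schwarz for an arbitrary positive semidefinite sesquilinear form. -/
lemma cs_core {F : Type*} [AddCommGroup F] [Module ℂ F]
    (c : PreInnerProductSpace.Core ℂ F) (x y : F) :
    ‖c.inner x y‖ ^ 2 ≤ (c.inner x x).re * (c.inner y y).re := by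
  letI := c
  letI : Inner ℂ F := c.toInner
  have h := InnerProductSpace.Core.inner_mul_inner_self_le (𝕜 := ℂ) (F := F) x y
  have hyx : ‖(inner ℂ y x : ℂ)‖ = ‖(inner ℂ x y : ℂ)‖ := by
    rw [show (inner ℂ y x : ℂ) = c.inner y x from rfl,
      show (inner ℂ x y : ℂ) = c.inner x y from rfl, ← c.conj_inner_symm, RCLike.norm_conj]
  rw [hyx] at h
  simpa [sq] using h

/-- The sesquilinear form on `ℂ × A` corresponding to the GNS inner product for the
canonical extension of `ω` to the unitization. -/
noncomputable def innerU (ω : A →L[ℂ] ℂ) (u v : ℂ × A) : ℂ :=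
  (starRingEnd ℂ) u.1 * v.1 + (starRingEnd ℂ) u.1 * ω v.2
    + v.1 * (starRingEnd ℂ) (ω u.2) + ω (star u.2 * v.2)

include hpos hn in
/-- The form `innerU` is a positive semidefinite sesquilinear form. -/
noncomputable def coreU : PreInnerProductSpace.Core ℂ (ℂ × A) where
  inner := innerU ω
  conj_inner_symm u v := by
    have h := herm_aux (ω : A →ₗ[ℂ] ℂ) (omega_pos' ω hpos) v.2 u.2
    simp only [ContinuousLinearMap.coe_coe] at h
    simp only [innerU, map_add, map_mul, Complex.conj_conj, h]
    ring
  re_inner_nonneg u := by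
    have hr : ‖ω u.2‖ ^ 2 ≤ (ω (star u.2 * u.2)).re := fact2 ω hpos hn u.2
    have hw2 : ‖ω u.2‖ ^ 2 = (ω u.2).re ^ 2 + (ω u.2).im ^ 2 := by
      rw [Complex.sq_norm, Complex.normSq_apply]; ring
    simp only [innerU, RCLike.re_to_complex, Complex.add_re, Complex.mul_re,
      Complex.conj_re, Complex.conj_im]
    nlinarith [sq_nonneg (u.1.re + (ω u.2).re), sq_nonneg (u.1.im + (ω u.2).im)]
  add_left u v w := by
    simp only [innerU, Prod.fst_add, Prod.snd_add, map_add, star_add, add_mul, mul_add]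
    ring
  smul_left u v r := by
    simp only [innerU, Prod.smul_fst, Prod.smul_snd, smul_eq_mul, map_mul, star_smul,
      smul_mul_assoc, map_smul, Complex.star_def]
    ring

end CStarAux

/-- A state on a (unital) C*-algebra: a positive linear functional of norm one. -/
def IsState {A : Type*} [NonUnitalCStarAlgebra A] [NormedSpace ℂ A] [StarModule ℂ A]
    [SMulCommClass ℂ A A] [IsScalarTower ℂ A A] (φ : A →L[ℂ] ℂ) : Prop :=
  (∀ a : A, 0 ≤ φ (star a * a)) ∧ ‖φ‖ = 1

/-- If `ω` is a state on a C*-algebra `A` and `a ≠ 0` satisfies `|ω a| = ‖a‖`, then in the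
GNS representation the vector `π_ω(a) Ω_ω` is a nonzero scalar multiple of the cyclic vector
`Ω_ω` (equivalently, there is a nonzero scalar `l` with `ω (b * a) = l * ω b` for all `b`),
and consequently the state `b ↦ ω (a* b a) / ω (a* a)` equals `ω`. -/
theorem stmt_0 {A : Type*} [NonUnitalCStarAlgebra A] [NormedSpace ℂ A] [StarModule ℂ A]
    [SMulCommClass ℂ A A] [IsScalarTower ℂ A A]
    (ω : A →L[ℂ] ℂ) (hω : IsState ω)
    (a : A) (ha : a ≠ 0) (hmax : ‖ω a‖ = ‖a‖) :
    (∃ l : ℂ, l ≠ 0 ∧ ∀ b : A, ω (b * a) = l * ω b) ∧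
      ∀ b : A, ω (star a * b * a) / ω (star a * a) = ω b := by
  obtain ⟨hpos, hn1⟩ := hω
  have hn : ‖ω‖ ≤ 1 := le_of_eq hn1
  set l₀ : ℂ := ω a with hl
  have hln : ‖l₀‖ = ‖a‖ := hmax
  have hl0 : l₀ ≠ 0 := by
    rw [← norm_ne_zero_iff, hln, norm_ne_zero_iff]
    exact ha
  -- `ω (star a * a) = ‖a‖ ^ 2`
  have him : (ω (star a * a)).im = 0 := ((Complex.nonneg_iff.mp (hpos a)).2).symm
  have hre_le : (ω (star a * a)).re ≤ ‖a‖ ^ 2 := by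
    calc (ω (star a * a)).re ≤ ‖ω (star a * a)‖ := by
          simpa using
            (le_abs_self _).trans (Complex.abs_re_le_norm (ω (star a * a)))
      _ ≤ ‖ω‖ * ‖star a * a‖ := ω.le_opNorm _
      _ ≤ 1 * ‖a‖ ^ 2 := by
          apply mul_le_mul hn ?_ (norm_nonneg _) zero_le_one
          rw [CStarRing.norm_star_mul_self, sq]
      _ = ‖a‖ ^ 2 := one_mul _
  have hre_ge : ‖a‖ ^ 2 ≤ (ω (star a * a)).re := by
    calc ‖a‖ ^ 2 = ‖ω a‖ ^ 2 := by rw [hmax]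
      _ ≤ (ω (star a * a)).re := fact2 ω hpos hn a
  have haa : ω (star a * a) = ((‖a‖ : ℂ)) ^ 2 := by
    apply Complex.ext
    · simpa [← Complex.ofReal_pow] using le_antisymm hre_le hre_ge
    · simpa [← Complex.ofReal_pow] using him
  have hstar_a : ω (star a) = (starRingEnd ℂ) l₀ := herm2 ω hpos hn a
  have hnormsq : l₀ * (starRingEnd ℂ) l₀ = ((‖a‖ : ℂ)) ^ 2 := by
    rw [Complex.mul_conj, Complex.normSq_eq_norm_sq, hln]
    norm_cast
  -- the GNS-type sesquilinear form on `ℂ × A`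
  set K : PreInnerProductSpace.Core ℂ (ℂ × A) := coreU ω hpos hn with hK
  have hKinner : ∀ u v : ℂ × A, K.inner u v = innerU ω u v := fun u v => rfl
  set c : ℂ × A := (-l₀, a) with hc
  have hcc : innerU ω c c = 0 := by
    simp only [innerU, hc, map_neg, neg_mul, mul_neg]
    rw [haa, ← hl, ← hstar_a, hstar_a, ← hnormsq]
    ring
  have zero1 : ∀ u : ℂ × A, innerU ω u c = 0 := by
    intro u
    have h := cs_core K u c
    rw [hKinner, hKinner, hKinner, hcc] at h
    simp only [Complex.zero_re, mul_zero] at h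
    have : ‖innerU ω u c‖ = 0 := by nlinarith [norm_nonneg (innerU ω u c)]
    exact norm_eq_zero.mp this
  have zero2 : ∀ u : ℂ × A, innerU ω c u = 0 := by
    intro u
    have h := K.conj_inner_symm c u
    rw [hKinner, hKinner, zero1 u, map_zero] at h
    exact h.symm
  -- first assertion
  have main1 : ∀ b : A, ω (b * a) = l₀ * ω b := by
    intro b
    have h := zero1 (0, star b)
    have hcb : (starRingEnd ℂ) (ω (star b)) = ω b := by
      rw [herm2 ω hpos hn b, Complex.conj_conj]
    simp only [innerU, map_zero, zero_mul, map_neg, neg_mul, mul_neg, zero_add,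
      star_star, hcb] at h
    linear_combination h
  refine ⟨⟨l₀, hl0, main1⟩, ?_⟩
  -- second assertion
  intro b
  have h₁ : ω (star a * b) = (starRingEnd ℂ) l₀ * ω b := by
    have h := zero2 (0, b)
    simp only [innerU, map_zero, zero_mul, map_neg, neg_mul, mul_zero, zero_add,
      add_zero, hc, ← hl] at h
    linear_combination h
  have main2 : ω (star a * b * a) = (l₀ * (starRingEnd ℂ) l₀) * ω b := by
    have h := zero2 (0, b * a - l₀ • b)
    simp only [innerU, map_zero, zero_mul, map_neg, neg_mul, mul_zero, zero_add,
      add_zero, map_sub, map_smul, mul_sub, mul_smul_comm, smul_eq_mul, hc, ← hl] at h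
    rw [show star a * (b * a) = star a * b * a from (mul_assoc _ _ _).symm] at h
    linear_combination h + (starRingEnd ℂ) l₀ * (main1 b) + l₀ * h₁
  rw [main2, haa, ← hnormsq, mul_div_cancel_left₀]
  exact mul_ne_zero hl0 (by simpa using hl0)
end

section
/- Let γ : [0,1] → D² be a continuous path in the closed unit disk D² ⊂ ℂ. Then there exists a continuous map λ : [0,1] → S¹ ⊂ ℂ such that for all t ∈ [0,1], either λ(t)·γ(t) = 1 or |γ(t)| < 1. -/
set_option maxHeartbeats 1000000 in
/-- Given a continuous path `γ` in the closed unit disk `D² ⊂ ℂ`, there is a continuous map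
`λ : [0,1] → S¹` such that for every `t`, either `λ t * γ t = 1` or `|γ t| < 1`. -/
theorem stmt_4 (γ : Set.Icc (0 : ℝ) 1 → ℂ) (hγ_cont : Continuous γ)
    (hγ_disk : ∀ t, ‖γ t‖ ≤ 1) :
    ∃ lam : Set.Icc (0 : ℝ) 1 → ℂ, Continuous lam ∧ (∀ t, ‖lam t‖ = 1) ∧
      ∀ t, lam t * γ t = 1 ∨ ‖γ t‖ < 1 := by
  classical
  obtain ⟨Γ, hU, hΓeq⟩ : ∃ Γ : ℝ → ℂ, UniformContinuous Γ ∧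
      ∀ t : Set.Icc (0:ℝ) 1, Γ (t : ℝ) = γ t := by
    refine ⟨fun t => γ (Set.projIcc 0 1 zero_le_one t), ?_, ?_⟩
    · exact (CompactSpace.uniformContinuous_of_continuous hγ_cont).comp
        (LipschitzWith.projIcc zero_le_one).uniformContinuous
    · intro t; simp [Set.projIcc_val]
  have hΓc : Continuous Γ := hU.continuous
  -- helper: exp of arg
  have hexp : ∀ z : ℂ, z ≠ 0 →
      Complex.exp ((z.arg : ℂ) * Complex.I) = z / ((‖z‖ : ℝ) : ℂ) := by
    intro z hz
    have h := Complex.norm_mul_exp_arg_mul_I z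
    have h0 : ((‖z‖ : ℝ) : ℂ) ≠ 0 := by
      simp [hz]
    rw [eq_div_iff h0, mul_comm]
    exact h
  have hsq : ∀ z : ℂ, ‖z‖^2 = z.re^2 + z.im^2 := by
    intro z
    rw [Complex.sq_norm, Complex.normSq_apply]; ring
  have hmul : ∀ (x y : ℂ) (c d : ℝ), x ≠ 0 → ((c:ℝ):ℂ) ≠ 0 → ((d:ℝ):ℂ) ≠ 0 →
      x / ((c:ℝ):ℂ) * ((y / x) / (((d:ℝ):ℂ) / ((c:ℝ):ℂ))) = y / ((d:ℝ):ℂ) := by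
    intro x y c d hx hc hd
    field_simp
  -- uniform continuity with explicit modulus
  obtain ⟨δ, hδpos, hδ'⟩ := Metric.uniformContinuous_iff.mp hU (1/8) (by norm_num)
  have hδ : ∀ s t : ℝ, |s - t| ≤ δ/2 → ‖Γ s - Γ t‖ ≤ 1/8 := by
    intro s t h
    have h2 : dist s t < δ := by rw [Real.dist_eq]; linarith
    have := hδ' h2
    rw [dist_eq_norm] at this
    linarith
  obtain ⟨n, hn⟩ := exists_nat_gt (2/δ)
  obtain ⟨m, hm, hmesh, hmN⟩ : ∃ m : ℝ, 0 < m ∧ 1/m ≤ δ/2 ∧ ((n+1:ℕ):ℝ)/m = 1 := by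
    refine ⟨(n : ℝ) + 1, by positivity, ?_, by push_cast; field_simp⟩
    have h1 : 2/δ < (n:ℝ) + 1 := by linarith
    have h2 : 2 < ((n:ℝ) + 1) * δ := by
      have := (div_lt_iff₀ hδpos).mp h1
      linarith
    rw [div_le_div_iff₀ (by positivity) (by norm_num : (0:ℝ) < 2)]
    nlinarith
  -- the key induction: a continuous angle function valid up to time k/m
  have key : ∀ k : ℕ, ∃ θ : ℝ → ℝ, Continuous θ ∧
      (∀ t : ℝ, 0 ≤ t → t ≤ (k:ℝ)/m → ‖Γ t‖ = 1 →
        Complex.exp ((θ t : ℂ) * Complex.I) = Γ t) ∧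
      (3/4 ≤ ‖Γ ((k:ℝ)/m)‖ →
        Complex.exp ((θ ((k:ℝ)/m) : ℂ) * Complex.I)
          = Γ ((k:ℝ)/m) / ((‖Γ ((k:ℝ)/m)‖ : ℝ) : ℂ)) := by
    intro k
    induction k with
    | zero =>
      refine ⟨fun _ => (Γ 0).arg, continuous_const, ?_, ?_⟩
      · intro t h0 h1 hΓ1
        have ht : t = 0 := le_antisymm (by simpa using h1) h0
        subst ht
        have hz : Γ 0 ≠ 0 := by
          intro h; rw [h] at hΓ1; simp at hΓ1
        rw [hexp _ hz, hΓ1]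
        simp
      · intro h34
        have h0 : ((0:ℕ):ℝ)/m = 0 := by simp
        rw [h0] at h34 ⊢
        have hz : Γ 0 ≠ 0 := by
          intro h; rw [h] at h34; norm_num at h34
        exact hexp _ hz
    | succ k ih =>
      obtain ⟨θ, hθc, hcond, hinv⟩ := ih
      set a : ℝ := (k:ℝ)/m with hadef
      set b : ℝ := ((k:ℝ)+1)/m with hbdef
      have hcast : (((k+1:ℕ)):ℝ)/m = b := by push_cast; rfl
      have hab : a ≤ b := by
        rw [hadef, hbdef, div_le_div_iff_of_pos_right hm]
        linarith
      have hba : b - a = 1/m := by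
        rw [hadef, hbdef]; field_simp; ring
      by_cases hC : ∃ s, a ≤ s ∧ s ≤ b ∧ ‖Γ s‖ = 1
      · -- the interval touches the boundary circle
        obtain ⟨s, hs1, hs2, hs3⟩ := hC
        have hnear : ∀ t, a ≤ t → t ≤ b → ‖Γ t - Γ s‖ ≤ 1/8 := by
          intro t h1 h2
          refine hδ t s ?_
          have : |t - s| ≤ 1/m := abs_le.mpr ⟨by linarith, by linarith⟩
          linarith
        have hlow : ∀ t, a ≤ t → t ≤ b → 7/8 ≤ ‖Γ t‖ := by
          intro t h1 h2
          have h3 := hnear t h1 h2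
          have h4 : ‖Γ s‖ - ‖Γ t‖ ≤ ‖Γ s - Γ t‖ := norm_sub_norm_le _ _
          rw [norm_sub_rev] at h4
          rw [hs3] at h4
          linarith
        have hΓa0 : Γ a ≠ 0 := by
          intro h
          have := hlow a le_rfl hab
          rw [h] at this; norm_num at this
        have hEinv := hinv (by linarith [hlow a le_rfl hab])
        have hslit : ∀ t, a ≤ t → t ≤ b → 0 < (Γ t / Γ a).re := by
          intro t h1 h2
          have hd : ‖Γ t - Γ a‖ ≤ 1/4 := by
            have h3 := hnear t h1 h2
            have h4 := hnear a le_rfl hab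
            have h5 : ‖Γ t - Γ a‖ ≤ ‖Γ t - Γ s‖ + ‖Γ s - Γ a‖ := by
              have := norm_add_le (Γ t - Γ s) (Γ s - Γ a)
              rwa [sub_add_sub_cancel] at this
            rw [norm_sub_rev] at h4
            linarith
          have e1 : ((Γ t).re - (Γ a).re)^2 + ((Γ t).im - (Γ a).im)^2 ≤ (1/4)^2 := by
            have h6 : ‖Γ t - Γ a‖^2 ≤ (1/4)^2 := by
              have := norm_nonneg (Γ t - Γ a); nlinarith
            rw [hsq] at h6
            simpa [Complex.sub_re, Complex.sub_im] using h6
          have e2 : (7/8:ℝ)^2 ≤ (Γ t).re^2 + (Γ t).im^2 := by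
            have := hlow t h1 h2
            rw [← hsq]; nlinarith [norm_nonneg (Γ t)]
          have e3 : (7/8:ℝ)^2 ≤ (Γ a).re^2 + (Γ a).im^2 := by
            have := hlow a le_rfl hab
            rw [← hsq]; nlinarith [norm_nonneg (Γ a)]
          have hnum : 0 < (Γ t).re * (Γ a).re + (Γ t).im * (Γ a).im := by nlinarith
          have hns : 0 < Complex.normSq (Γ a) := Complex.normSq_pos.mpr hΓa0
          rw [Complex.div_re, ← add_div]
          exact div_pos hnum hns
        have hclmem : ∀ t : ℝ, a ≤ max a (min t b) ∧ max a (min t b) ≤ b := fun t =>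
          ⟨le_max_left _ _, max_le hab (min_le_right _ _)⟩
        have hval1 : ∀ t : ℝ, t ≤ a →
            θ (min t a) + (Γ (max a (min t b)) / Γ a).arg = θ t := by
          intro t h
          rw [min_eq_left (le_trans h hab), max_eq_left h, min_eq_left h,
            div_self hΓa0, Complex.arg_one, add_zero]
        have hval2 : ∀ t, a ≤ t → t ≤ b →
            Complex.exp (((θ (min t a) + (Γ (max a (min t b)) / Γ a).arg : ℝ) : ℂ)
                * Complex.I) = Γ t / ((‖Γ t‖ : ℝ) : ℂ) := by
          intro t h1 h2
          have hΓt0 : Γ t ≠ 0 := by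
            intro h
            have := hlow t h1 h2
            rw [h] at this; norm_num at this
          have hw0 : Γ t / Γ a ≠ 0 := div_ne_zero hΓt0 hΓa0
          have hna : ((‖Γ a‖ : ℝ) : ℂ) ≠ 0 :=
            Complex.ofReal_ne_zero.mpr (norm_ne_zero_iff.mpr hΓa0)
          have hnt : ((‖Γ t‖ : ℝ) : ℂ) ≠ 0 :=
            Complex.ofReal_ne_zero.mpr (norm_ne_zero_iff.mpr hΓt0)
          rw [min_eq_left h2, max_eq_right h1, min_eq_right h1, Complex.ofReal_add,
            add_mul, Complex.exp_add, hEinv, hexp _ hw0, norm_div,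
            Complex.ofReal_div]
          exact hmul (Γ a) (Γ t) ‖Γ a‖ ‖Γ t‖ hΓa0 hna hnt
        refine ⟨fun t => θ (min t a) + (Γ (max a (min t b)) / Γ a).arg, ?_, ?_, ?_⟩
        · refine (hθc.comp (continuous_id.min continuous_const)).add ?_
          have heq : (fun t : ℝ => (Γ (max a (min t b)) / Γ a).arg)
              = Complex.arg ∘ (fun t : ℝ => Γ (max a (min t b)) / Γ a) := rfl
          rw [heq, continuous_iff_continuousAt]
          intro t
          refine ContinuousAt.comp ?_ ?_
          · exact Complex.continuousAt_arg (Complex.mem_slitPlane_iff.mpr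
              (Or.inl (hslit _ (hclmem t).1 (hclmem t).2)))
          · exact ((hΓc.comp (continuous_const.max
              (continuous_id.min continuous_const))).div_const _).continuousAt
        · intro t h0 h1 hΓ1
          beta_reduce
          rw [hcast] at h1
          rcases le_or_gt t a with h | h
          · rw [hval1 t h]
            exact hcond t h0 h hΓ1
          · have := hval2 t h.le h1
            rw [hΓ1, Complex.ofReal_one, div_one] at this
            exact this
        · intro _
          beta_reduce
          rw [hcast]
          exact hval2 b hab le_rfl
      · -- the interval stays inside the open disk: interpolate the angle linearly
        push_neg at hC
        refine ⟨fun t => θ (min t a) + (max a (min t b) - a) * m * ((Γ b).arg - θ a),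
          ?_, ?_, ?_⟩
        · refine (hθc.comp (continuous_id.min continuous_const)).add ?_
          exact (((continuous_const.max (continuous_id.min continuous_const)).sub
            continuous_const).mul continuous_const).mul continuous_const
        · intro t h0 h1 hΓ1
          beta_reduce
          rw [hcast] at h1
          rcases le_or_gt t a with h | h
          · rw [min_eq_left (le_trans h hab), max_eq_left h, min_eq_left h, sub_self,
              zero_mul, zero_mul, add_zero]
            exact hcond t h0 h hΓ1
          · exact absurd hΓ1 (hC t h.le h1)
        · intro h34
          beta_reduce
          rw [hcast] at h34 ⊢
          have hΓb0 : Γ b ≠ 0 := by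
            intro h; rw [h] at h34; norm_num at h34
          have hvalb : θ (min b a) + (max a (min b b) - a) * m * ((Γ b).arg - θ a)
              = (Γ b).arg := by
            rw [min_eq_right hab, min_self, max_eq_right hab, hba]
            field_simp
            ring
          rw [hvalb]
          exact hexp _ hΓb0
  -- conclude
  obtain ⟨θ, hθc, hcond, -⟩ := key (n+1)
  refine ⟨fun t => Complex.exp (((-θ (t:ℝ) : ℝ) : ℂ) * Complex.I), ?_, ?_, ?_⟩
  · exact Complex.continuous_exp.comp
      ((Complex.continuous_ofReal.comp (hθc.comp continuous_subtype_val).neg).mul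
        continuous_const)
  · intro t
    rw [Complex.norm_exp_ofReal_mul_I]
  · intro t
    by_cases h : ‖γ t‖ = 1
    · left
      have hc := hcond (t:ℝ) t.2.1 (by rw [hmN]; exact t.2.2)
        (by rw [hΓeq]; exact h)
      rw [← hΓeq, ← hc, ← Complex.exp_add]
      rw [show ((-θ (t:ℝ) : ℝ) : ℂ) * Complex.I + ((θ (t:ℝ) : ℝ) : ℂ) * Complex.I = 0 by
        push_cast; ring]
      exact Complex.exp_zero
    · right
      exact lt_of_le_of_ne (hγ_disk t) h
end

section
/- Let M be a commutative monoid, m ∈ M, and suppose the localization m⁻¹M is a group. Then the canonical map ι₀ : M → m⁻¹M is the Grothendieck group completion of M: for every abelian group A and monoid homomorphism f : M → A there exists a unique group homomorphism g : m⁻¹M → A with g ∘ ι₀ = f. -/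
universe u v

/-- If the localization `m⁻¹M` of a commutative monoid `M` at an element `m` is a group, then
the canonical map `ι₀ : M → m⁻¹M` is the Grothendieck group completion of `M`: every monoid
homomorphism from `M` to an abelian group factors uniquely through it. -/
theorem stmt_17 {M : Type u} [CommMonoid M] (m : M)
    (hgrp : ∀ x : Localization (Submonoid.powers m), IsUnit x) :
    ∀ (A : Type v) [CommGroup A] (f : M →* A),
      ∃! g : Localization (Submonoid.powers m) →* A,
        g.comp (Localization.monoidOf (Submonoid.powers m)).toMonoidHom = f := by
  intro A _ f
  have hy : ∀ y : Submonoid.powers m,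
      IsUnit (f y) := fun y => Group.isUnit _
  refine ⟨(Localization.monoidOf (Submonoid.powers m)).lift hy, ?_, ?_⟩
  · exact (Localization.monoidOf (Submonoid.powers m)).lift_comp hy
  · intro j hj
    exact ((Localization.monoidOf (Submonoid.powers m)).lift_unique hy
      (fun x => by rw [← hj]; rfl)).symm
end
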